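/- Under the highest-weight axioms, the multiplicities in a Δ-filtration are well-defined: if 0 = M_0 ⊆ M_1 ⊆ ⋯ ⊆ M_r = M and 0 = M'_0 ⊆ M'_1 ⊆ ⋯ ⊆ M'_s = M are two Δ-filtrations of the same module M, then for every λ ∈ Λ the number of indices k with M_k/M_{k−1} ≅ Δ(λ) equals the number of indices k with M'_k/M'_{k−1} ≅ Δ(λ); in particular r = s. -/

import Mathlib

/-- The subquotient `q / p` associated with submodules `p ≤ q` of a module. -/
abbrev Subquot {A M : Type} [Ring A] [AddCommGroup M] [Module A M]
    (p q : Submodule A M) : Type :=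
  ↥q ⧸ (p.comap q.subtype)

/-- `M` has a finite filtration `0 = M₀ ⊆ M₁ ⊆ ⋯ ⊆ M_r = M` whose successive
quotients are standard modules `Δ μ` with `μ ∈ S`. -/
def HasFilt (A : Type) [Ring A] {Λ : Type} (Δ : Λ → Type)
    [∀ l, AddCommGroup (Δ l)] [∀ l, Module A (Δ l)]
    (S : Set Λ) (M : Type) [AddCommGroup M] [Module A M] : Prop :=
  ∃ (r : ℕ) (c : Fin (r + 1) → Submodule A M),
    Monotone c ∧ c 0 = ⊥ ∧ c (Fin.last r) = ⊤ ∧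
    ∀ k : Fin r, ∃ μ ∈ S, Nonempty (Subquot (c k.castSucc) (c k.succ) ≃ₗ[A] Δ μ)

/-- `M` belongs to the class `C_S`: every simple subquotient of `M` is isomorphic
to some `L μ` with `μ ∈ S`. -/
def InC (A : Type) [Ring A] {Λ : Type} (L : Λ → Type)
    [∀ l, AddCommGroup (L l)] [∀ l, Module A (L l)]
    (S : Set Λ) (M : Type) [AddCommGroup M] [Module A M] : Prop :=
  ∀ p q : Submodule A M, p ≤ q → IsSimpleModule A (Subquot p q) →
    ∃ μ ∈ S, Nonempty (Subquot p q ≃ₗ[A] L μ)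


open Module


section HW
variable (K A : Type) [Field K] [Ring A] [Algebra K A]

/-- Restriction of scalars along `algebraMap K A`. -/
def hwMod (X : Type) [AddCommGroup X] [Module A X] : Module K X :=
  Module.compHom X (algebraMap K A)

/-- Scalar multiplication of `K` on `A`-linear maps. -/
def hwSMul {X Y : Type} [AddCommGroup X] [Module A X] [AddCommGroup Y] [Module A Y]
    (c : K) (f : X →ₗ[A] Y) : X →ₗ[A] Y where
  toFun x := algebraMap K A c • f x
  map_add' x y := by simp
  map_smul' a x := by
    simp only [map_smul, RingHom.id_apply, ← mul_smul, Algebra.commutes]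

@[simp] lemma hwSMul_apply {X Y : Type} [AddCommGroup X] [Module A X] [AddCommGroup Y]
    [Module A Y] (c : K) (f : X →ₗ[A] Y) (x : X) :
    hwSMul K A c f x = algebraMap K A c • f x := rfl

/-- The `K`-module structure on `A`-linear maps. -/
def hwHom (X Y : Type) [AddCommGroup X] [Module A X] [AddCommGroup Y] [Module A Y] :
    Module K (X →ₗ[A] Y) where
  smul := hwSMul K A
  one_smul f := by ext x; show algebraMap K A 1 • f x = f x; simp
  mul_smul c c' f := by
    ext x; show algebraMap K A (c * c') • f x = algebraMap K A c • (algebraMap K A c' • f x)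
    simp [mul_smul]
  smul_zero c := by ext x; show algebraMap K A c • (0 : X →ₗ[A] Y) x = 0; simp
  smul_add c f g := by
    ext x
    show algebraMap K A c • (f + g) x = algebraMap K A c • f x + algebraMap K A c • g x
    simp
  add_smul c c' f := by
    ext x
    show algebraMap K A (c + c') • f x = algebraMap K A c • f x + algebraMap K A c' • f x
    simp [add_smul]
  zero_smul f := by ext x; show algebraMap K A 0 • f x = 0; simp

/-- Dimension over `K` of the space of `A`-linear maps. -/
noncomputable def hdim (X Y : Type) [AddCommGroup X] [Module A X] [AddCommGroup Y]
    [Module A Y] : ℕ :=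
  @finrank K (X →ₗ[A] Y) _ _ (hwHom K A X Y)


variable [FiniteDimensional K A]

lemma hwFinK (X : Type) [AddCommGroup X] [Module A X] [Module.Finite A X] :
    @FiniteDimensional K X _ _ (hwMod K A X) := by
  letI := hwMod K A X
  haveI : IsScalarTower K A X :=
    ⟨fun c a x => by
      show (c • a) • x = algebraMap K A c • (a • x)
      rw [Algebra.smul_def, mul_smul]⟩
  exact Module.Finite.trans A X

include K in
lemma hwNoeth (X : Type) [AddCommGroup X] [Module A X] [Module.Finite A X] :
    IsNoetherian A X := by
  letI := hwMod K A X
  haveI : IsScalarTower K A X :=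
    ⟨fun c a x => by
      show (c • a) • x = algebraMap K A c • (a • x)
      rw [Algebra.smul_def, mul_smul]⟩
  haveI := hwFinK K A X
  exact isNoetherian_of_tower K inferInstance

include K in
lemma hwSubFin (X : Type) [AddCommGroup X] [Module A X] [Module.Finite A X]
    (p : Submodule A X) : Module.Finite A ↥p := by
  haveI := hwNoeth K A X
  exact Module.Finite.iff_fg.2 (IsNoetherian.noetherian p)

lemma hwHomFin (X Y : Type) [AddCommGroup X] [Module A X] [AddCommGroup Y] [Module A Y]
    [Module.Finite A X] [Module.Finite A Y] :
    @FiniteDimensional K (X →ₗ[A] Y) _ _ (hwHom K A X Y) := by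
  letI mX := hwMod K A X
  letI mY := hwMod K A Y
  letI hh := hwHom K A X Y
  haveI := hwFinK K A X
  haveI := hwFinK K A Y
  let emb : (X →ₗ[A] Y) →ₗ[K] (X →ₗ[K] Y) :=
    { toFun := fun f =>
        { toFun := f
          map_add' := f.map_add
          map_smul' := fun c x => by
            show f (algebraMap K A c • x) = algebraMap K A c • f x
            simp }
      map_add' := fun f g => rfl
      map_smul' := fun c f => rfl }
  have hinj : Function.Injective emb := by
    intro f g h
    ext x
    exact congrArg (fun (u : X →ₗ[K] Y) => u x) h
  exact FiniteDimensional.of_injective emb hinj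

/-- `hdim` is invariant under `A`-linear isomorphism of the target. -/
lemma hdim_congr (X Y Y' : Type) [AddCommGroup X] [Module A X] [AddCommGroup Y] [Module A Y]
    [AddCommGroup Y'] [Module A Y'] (e : Y ≃ₗ[A] Y') :
    hdim K A X Y = hdim K A X Y' := by
  letI h1 := hwHom K A X Y
  letI h2 := hwHom K A X Y'
  refine LinearEquiv.finrank_eq (R := K)
    { toFun := fun f => e.toLinearMap ∘ₗ f
      invFun := fun f => e.symm.toLinearMap ∘ₗ f
      map_add' := fun f g => by ext x; simp
      map_smul' := fun c f => by
        ext x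
        show e (algebraMap K A c • f x) = algebraMap K A c • e (f x)
        simp
      left_inv := fun f => by ext x; simp
      right_inv := fun f => by ext x; simp }

lemma hdim_zero (X Y : Type) [AddCommGroup X] [Module A X] [AddCommGroup Y] [Module A Y]
    (h : Subsingleton Y) : hdim K A X Y = 0 := by
  letI h1 := hwHom K A X Y
  haveI : Subsingleton (X →ₗ[A] Y) := ⟨fun f g => by ext x; exact Subsingleton.elim _ _⟩
  exact Module.finrank_zero_of_subsingleton

omit [FiniteDimensional K A] in
lemma hdim_zero' (X Y : Type) [AddCommGroup X] [Module A X] [AddCommGroup Y] [Module A Y]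
    (h : Subsingleton (X →ₗ[A] Y)) : hdim K A X Y = 0 := by
  letI h1 := hwHom K A X Y
  exact Module.finrank_zero_of_subsingleton

/-- Additivity of `hdim Q –` on a short exact sequence, for `Q` projective. -/
lemma hdim_add (Q : Type) [AddCommGroup Q] [Module A Q] [Module.Projective A Q]
    [Module.Finite A Q] (N : Type) [AddCommGroup N] [Module A N] [Module.Finite A N]
    (p : Submodule A N) :
    hdim K A Q N = hdim K A Q ↥p + hdim K A Q (N ⧸ p) := by
  haveI := hwSubFin K A N p
  letI h1 := hwHom K A Q ↥p
  letI h2 := hwHom K A Q N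
  letI h3 := hwHom K A Q (N ⧸ p)
  haveI := hwHomFin K A Q ↥p
  haveI := hwHomFin K A Q N
  haveI := hwHomFin K A Q (N ⧸ p)
  let ι : (Q →ₗ[A] ↥p) →ₗ[K] (Q →ₗ[A] N) :=
    { toFun := fun f => p.subtype ∘ₗ f
      map_add' := fun f g => by ext x; simp
      map_smul' := fun c f => by
        ext x
        show (p.subtype) (algebraMap K A c • f x) = algebraMap K A c • (p.subtype) (f x)
        simp }
  let π : (Q →ₗ[A] N) →ₗ[K] (Q →ₗ[A] (N ⧸ p)) :=
    { toFun := fun f => p.mkQ ∘ₗ f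
      map_add' := fun f g => by ext x; simp
      map_smul' := fun c f => by
        ext x
        show (p.mkQ) (algebraMap K A c • f x) = algebraMap K A c • (p.mkQ) (f x)
        simp }
  have hπ : Function.Surjective π := by
    intro g
    obtain ⟨h, hh⟩ := Module.projective_lifting_property p.mkQ g (Submodule.mkQ_surjective p)
    exact ⟨h, hh⟩
  have hι : Function.Injective ι := by
    intro f g h
    ext x
    have := congrArg (fun (u : Q →ₗ[A] N) => u x) h
    exact this
  have hker : LinearMap.ker π = LinearMap.range ι := by
    ext f
    simp only [LinearMap.mem_ker, LinearMap.mem_range]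
    constructor
    · intro hf
      have hmem : ∀ x, f x ∈ p := by
        intro x
        have := congrArg (fun (u : Q →ₗ[A] (N ⧸ p)) => u x) hf
        simpa [π, Submodule.Quotient.mk_eq_zero] using this
      exact ⟨f.codRestrict p hmem, by ext x; rfl⟩
    · rintro ⟨g, rfl⟩
      ext x
      simp [ι, π, Submodule.Quotient.mk_eq_zero]
  have rn := LinearMap.finrank_range_add_finrank_ker π
  rw [LinearMap.range_eq_top.2 hπ, finrank_top, hker,
    LinearMap.finrank_range_of_inj hι] at rn
  show finrank K (Q →ₗ[A] N) = finrank K (Q →ₗ[A] ↥p) + finrank K (Q →ₗ[A] (N ⧸ p))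
  omega


omit [FiniteDimensional K A] in
include A in
/-- If `N` has a Δ-filtration with factors indexed by `S` and admits a nonzero map to `T`,
then some `Δ ν`, `ν ∈ S`, admits a nonzero map to `T`. -/
lemma filt_hom {Λ : Type} {Δ : Λ → Type} [∀ l, AddCommGroup (Δ l)] [∀ l, Module A (Δ l)]
    {S : Set Λ} {N T : Type} [AddCommGroup N] [Module A N] [AddCommGroup T] [Module A T]
    (hfilt : HasFilt A Δ S N) (f : N →ₗ[A] T) (hf : f ≠ 0) :
    ∃ ν ∈ S, ∃ g : Δ ν →ₗ[A] T, g ≠ 0 := by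
  obtain ⟨r, cc, hmono, h0, hl, hq⟩ := hfilt
  classical
  set Bad : Finset (Fin (r + 1)) :=
    Finset.univ.filter (fun j => ¬ cc j ≤ LinearMap.ker f) with hBad
  have hlast : Fin.last r ∈ Bad := by
    simp only [hBad, Finset.mem_filter, Finset.mem_univ, true_and, hl]
    intro htop
    exact hf (LinearMap.ker_eq_top.1 (top_le_iff.1 htop))
  have hne : Bad.Nonempty := ⟨_, hlast⟩
  set j := Bad.min' hne with hj
  have hjmem : j ∈ Bad := Bad.min'_mem hne
  have hjbad : ¬ cc j ≤ LinearMap.ker f := by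
    have := hjmem; simpa [hBad] using this
  have hj0 : j ≠ 0 := by
    intro h
    apply hjbad
    rw [h, h0]
    exact bot_le
  obtain ⟨i, hi⟩ := Fin.exists_succ_eq_of_ne_zero hj0
  have hprev : cc i.castSucc ≤ LinearMap.ker f := by
    by_contra hcon
    have hmem : i.castSucc ∈ Bad := by simp [hBad, hcon]
    have := Bad.min'_le _ hmem
    rw [← hj] at this
    have hlt : i.castSucc < j := by rw [← hi]; exact Fin.castSucc_lt_succ
    exact absurd (lt_of_lt_of_le hlt this) (lt_irrefl _)
  obtain ⟨ν, hνS, ⟨e⟩⟩ := hq i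
  refine ⟨ν, hνS, ?_⟩
  set p := (cc i.castSucc).comap (cc i.succ).subtype with hp
  let fq : ↥(cc i.succ) →ₗ[A] T := f ∘ₗ (cc i.succ).subtype
  have hcond : p ≤ LinearMap.ker fq := by
    intro x hx
    simp only [LinearMap.mem_ker, fq, LinearMap.comp_apply]
    exact hprev hx
  let g0 : Subquot (cc i.castSucc) (cc i.succ) →ₗ[A] T := Submodule.liftQ p fq hcond
  have hg0 : g0 ≠ 0 := by
    intro h
    apply hjbad
    rw [← hi]
    intro x hx
    have : fq ⟨x, hx⟩ = 0 := by
      have : g0 (Submodule.Quotient.mk ⟨x, hx⟩) = 0 := by rw [h]; rfl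
      simpa [g0, Submodule.liftQ_apply] using this
    simpa [fq] using this
  refine ⟨g0 ∘ₗ (e.symm : Δ ν →ₗ[A] Subquot (cc i.castSucc) (cc i.succ)), ?_⟩
  intro h
  apply hg0
  refine LinearMap.ext fun y => ?_
  have := congrArg (fun (u : Δ ν →ₗ[A] T) => u (e y)) h
  simpa using this

omit [FiniteDimensional K A] in
include A in
/-- Factoring a map through a surjection whose kernel it kills. -/
lemma hw_factor {N N' T : Type} [AddCommGroup N] [Module A N] [AddCommGroup N'] [Module A N']
    [AddCommGroup T] [Module A T] (q : N →ₗ[A] N') (hq : Function.Surjective q)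
    (f : N →ₗ[A] T) (h : LinearMap.ker q ≤ LinearMap.ker f) :
    ∃ g : N' →ₗ[A] T, g ∘ₗ q = f := by
  let e := q.quotKerEquivOfSurjective hq
  refine ⟨(Submodule.liftQ (LinearMap.ker q) f h) ∘ₗ (e.symm : N' →ₗ[A] _), ?_⟩
  ext x
  have he : e.symm (q x) = Submodule.Quotient.mk x := by
    apply e.injective
    rw [LinearEquiv.apply_symm_apply]
    show q x = e (Submodule.Quotient.mk x)
    simp [e, LinearMap.quotKerEquivOfSurjective, LinearEquiv.trans_apply]
  simp [he, Submodule.liftQ_apply]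

end HW



/-- under the highest-weight axioms, the multiplicities in a
Δ-filtration are well-defined: two Δ-filtrations of the same module have, for each
`λ`, the same number of successive quotients isomorphic to `Δ(λ)`; in particular
they have the same length. -/
theorem stmt16 (K A : Type) [Field K] [Ring A] [Algebra K A] [FiniteDimensional K A]
    (Λ : Type) [Fintype Λ] [PartialOrder Λ]
    (L : Λ → Type) [∀ l, AddCommGroup (L l)] [∀ l, Module A (L l)]
    [∀ l, Module.Finite A (L l)]
    (Δ : Λ → Type) [∀ l, AddCommGroup (Δ l)] [∀ l, Module A (Δ l)]
    [∀ l, Module.Finite A (Δ l)]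
    (P : Λ → Type) [∀ l, AddCommGroup (P l)] [∀ l, Module A (P l)]
    [∀ l, Module.Finite A (P l)]
    -- the simple modules `L λ`, pairwise non-isomorphic, exhausting all simples
    (hsimple : ∀ l, IsSimpleModule A (L l))
    (hdistinct : ∀ l m, l ≠ m → IsEmpty (L l ≃ₗ[A] L m))
    (hall : ∀ (M : Type) [AddCommGroup M] [Module A M] [Module.Finite A M],
      IsSimpleModule A M → ∃ l, Nonempty (M ≃ₗ[A] L l))
    -- axiom (1)
    (hhom : ∀ l m, ¬ l ≤ m → ∀ f : Δ l →ₗ[A] Δ m, f = 0)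
    -- axiom (2): endomorphisms of `Δ λ` are scalars from `K`
    (hend : ∀ l (f : Δ l →ₗ[A] Δ l), ∃ c : K, ∀ x, f x = algebraMap K A c • x)
    -- axiom (3): projective covers `P λ ↠ L λ` and surjections `P λ ↠ Δ λ` with
    -- kernel filtered by `Δ ν`, `ν > λ`
    (hproj : ∀ l, Module.Projective A (P l))
    (pr : ∀ l, P l →ₗ[A] L l)
    (hprsurj : ∀ l, Function.Surjective (pr l))
    (hprcover : ∀ l (N : Submodule A (P l)), Submodule.map (pr l) N = ⊤ → N = ⊤)
    (rh : ∀ l, P l →ₗ[A] Δ l)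
    (hrhsurj : ∀ l, Function.Surjective (rh l))
    (hrhker : ∀ l, HasFilt A Δ {ν | l < ν} ↥(LinearMap.ker (rh l)))
    (M : Type) [AddCommGroup M] [Module A M] [Module.Finite A M]
    (r s : ℕ) (c : Fin (r + 1) → Submodule A M) (c' : Fin (s + 1) → Submodule A M)
    (hc : Monotone c) (hc0 : c 0 = ⊥) (hcl : c (Fin.last r) = ⊤)
    (hcq : ∀ k : Fin r, ∃ μ, Nonempty (Subquot (c k.castSucc) (c k.succ) ≃ₗ[A] Δ μ))
    (hc' : Monotone c') (hc'0 : c' 0 = ⊥) (hc'l : c' (Fin.last s) = ⊤)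
    (hc'q : ∀ k : Fin s, ∃ μ, Nonempty (Subquot (c' k.castSucc) (c' k.succ) ≃ₗ[A] Δ μ)) :
    r = s ∧
    ∀ l : Λ,
      Nat.card {k : Fin r // Nonempty (Subquot (c k.castSucc) (c k.succ) ≃ₗ[A] Δ l)} =
      Nat.card {k : Fin s // Nonempty (Subquot (c' k.castSucc) (c' k.succ) ≃ₗ[A] Δ l)} := by
  classical
  -- Step A1: the kernel of `pr l` is the unique maximal submodule of `P l`
  have hker_max : ∀ l (N : Submodule A (P l)), N ≠ ⊤ → N ≤ LinearMap.ker (pr l) := by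
    intro l N hN
    rcases eq_bot_or_eq_top (Submodule.map (pr l) N) with hb | ht
    · intro x hx
      have hmem : pr l x ∈ Submodule.map (pr l) N := Submodule.mem_map_of_mem hx
      rw [hb, Submodule.mem_bot] at hmem
      exact hmem
    · exact absurd (hprcover l N ht) hN
  -- Step A2: any simple quotient of `Δ ν` is `L ν`
  have hquot_simple : ∀ l ν (g : Δ ν →ₗ[A] L l), Function.Surjective g → l = ν := by
    intro l ν g hgsurj
    haveI : IsSimpleModule A (L l) := hsimple l
    haveI : IsSimpleModule A (L ν) := hsimple ν
    haveI := IsSimpleModule.nontrivial A (L l)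
    haveI := IsSimpleModule.nontrivial A (L ν)
    set h : P ν →ₗ[A] L l := g ∘ₗ rh ν with hh
    have hhsurj : Function.Surjective h := hgsurj.comp (hrhsurj ν)
    have hNtop : LinearMap.ker h ≠ ⊤ := by
      intro htop
      obtain ⟨y, hy⟩ := exists_ne (0 : L l)
      obtain ⟨x, rfl⟩ := hhsurj y
      exact hy (LinearMap.mem_ker.1 (htop ▸ Submodule.mem_top))
    have hNle : LinearMap.ker h ≤ LinearMap.ker (pr ν) := hker_max ν _ hNtop
    have hsimpleq : IsSimpleModule A (P ν ⧸ LinearMap.ker h) :=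
      IsSimpleModule.congr (h.quotKerEquivOfSurjective hhsurj)
    have hcoatom : IsCoatom (LinearMap.ker h) := isSimpleModule_iff_isCoatom.1 hsimpleq
    have hprne : LinearMap.ker (pr ν) ≠ ⊤ := by
      intro htop
      obtain ⟨y, hy⟩ := exists_ne (0 : L ν)
      obtain ⟨x, rfl⟩ := hprsurj ν y
      exact hy (LinearMap.mem_ker.1 (htop ▸ Submodule.mem_top))
    have hNe : LinearMap.ker h = LinearMap.ker (pr ν) := by
      rcases eq_or_lt_of_le hNle with heq | hlt
      · exact heq
      · exact absurd (hcoatom.2 _ hlt) hprne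
    by_contra hne
    refine (hdistinct l ν hne).false ?_
    exact ((h.quotKerEquivOfSurjective hhsurj).symm.trans
      ((Submodule.quotEquivOfEq _ _ hNe).trans ((pr ν).quotKerEquivOfSurjective (hprsurj ν))))
  -- Step A3: `Δ l` is nontrivial
  have hΔnontriv : ∀ l, Nontrivial (Δ l) := by
    intro l
    by_contra hcon
    rw [not_nontrivial_iff_subsingleton] at hcon
    haveI := IsSimpleModule.nontrivial A (L l)
    have hker_top : ∀ x : P l, x ∈ LinearMap.ker (rh l) := fun x =>
      LinearMap.mem_ker.2 (Subsingleton.elim _ _)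
    set f : ↥(LinearMap.ker (rh l)) →ₗ[A] L l := pr l ∘ₗ (LinearMap.ker (rh l)).subtype with hf
    have hfne : f ≠ 0 := by
      intro h0
      obtain ⟨y, hy⟩ := exists_ne (0 : L l)
      obtain ⟨x, rfl⟩ := hprsurj l y
      have : f ⟨x, hker_top x⟩ = 0 := by rw [h0]; rfl
      exact hy this
    obtain ⟨ν, hν, g, hg⟩ := filt_hom (A := A) (hrhker l) f hfne
    have hgsurj : Function.Surjective g := by
      haveI : IsSimpleModule A (L l) := hsimple l
      rcases eq_bot_or_eq_top (LinearMap.range g) with hb | ht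
      · exact absurd (LinearMap.range_eq_bot.1 hb) hg
      · exact LinearMap.range_eq_top.1 ht
    exact absurd (hquot_simple l ν g hgsurj) (ne_of_lt hν)
  -- Step B: nonzero maps `P l → Δ m'` force `l ≤ m'`
  have hB : ∀ l m' (f : P l →ₗ[A] Δ m'), f ≠ 0 → l ≤ m' := by
    intro l m' f hf
    by_cases hrestr : f ∘ₗ (LinearMap.ker (rh l)).subtype = 0
    · have hkerle : LinearMap.ker (rh l) ≤ LinearMap.ker f := by
        intro x hx
        have := congrArg (fun (u : ↥(LinearMap.ker (rh l)) →ₗ[A] Δ m') =>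
          u ⟨x, hx⟩) hrestr
        simpa using this
      obtain ⟨g, hg⟩ := hw_factor (A := A) (rh l) (hrhsurj l) f hkerle
      have hgne : g ≠ 0 := by
        rintro rfl
        rw [← hg] at hf
        simp at hf
      by_contra hle
      exact hgne (hhom l m' hle g)
    · obtain ⟨ν, hν, g, hg⟩ := filt_hom (A := A) (hrhker l) _ hrestr
      have hνm : ν ≤ m' := by
        by_contra hn
        exact hg (hhom ν m' hn g)
      exact le_trans (le_of_lt hν) hνm
  -- Step B2: maps `P l → Δ l` factor through `rh l`
  have hBl : ∀ l (f : P l →ₗ[A] Δ l), ∃ g : Δ l →ₗ[A] Δ l, g ∘ₗ rh l = f := by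
    intro l f
    have hkerle : LinearMap.ker (rh l) ≤ LinearMap.ker f := by
      by_cases hrestr : f ∘ₗ (LinearMap.ker (rh l)).subtype = 0
      · intro x hx
        have := congrArg (fun (u : ↥(LinearMap.ker (rh l)) →ₗ[A] Δ l) =>
          u ⟨x, hx⟩) hrestr
        simpa using this
      · obtain ⟨ν, hν, g, hg⟩ := filt_hom (A := A) (hrhker l) _ hrestr
        have hνm : ν ≤ l := by
          by_contra hn
          exact hg (hhom ν l hn g)
        exact absurd (lt_of_lt_of_le hν hνm) (lt_irrefl l)
    exact hw_factor (A := A) (rh l) (hrhsurj l) f hkerle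
  -- the dimension matrix
  set T : Λ → Λ → ℕ := fun l m' => hdim K A (P l) (Δ m') with hT
  have hT0 : ∀ l m', ¬ l ≤ m' → T l m' = 0 := by
    intro l m' hle
    have hzero : ∀ f : P l →ₗ[A] Δ m', f = 0 := by
      intro f
      by_contra hf
      exact hle (hB l m' f hf)
    exact hdim_zero' K A _ _ ⟨fun f g => (hzero f).trans (hzero g).symm⟩
  have hT1 : ∀ l, T l l = 1 := by
    intro l
    haveI := hΔnontriv l
    letI hEnd := hwHom K A (Δ l) (Δ l)
    letI hP := hwHom K A (P l) (Δ l)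
    let Φ : (Δ l →ₗ[A] Δ l) →ₗ[K] (P l →ₗ[A] Δ l) :=
      { toFun := fun g => g ∘ₗ rh l
        map_add' := fun g g' => by ext x; rfl
        map_smul' := fun a g => by ext x; rfl }
    have hΦinj : Function.Injective Φ := by
      intro g g' h
      ext x
      obtain ⟨y, rfl⟩ := hrhsurj l x
      exact congrArg (fun (u : P l →ₗ[A] Δ l) => u y) h
    have hΦsurj : Function.Surjective Φ := fun f => hBl l f
    let Ψ : K →ₗ[K] (Δ l →ₗ[A] Δ l) :=
      { toFun := fun a => hwSMul K A a LinearMap.id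
        map_add' := fun a b => by
          ext x
          show algebraMap K A (a + b) • x = algebraMap K A a • x + algebraMap K A b • x
          simp [add_smul]
        map_smul' := fun a b => by
          ext x
          show algebraMap K A (a * b) • x = algebraMap K A a • (algebraMap K A b • x)
          simp [mul_smul] }
    have hΨsurj : Function.Surjective Ψ := by
      intro f
      obtain ⟨a, ha⟩ := hend l f
      exact ⟨a, by ext x; exact (ha x).symm⟩
    have hΨinj : Function.Injective Ψ := by
      intro a b h
      by_contra hne
      have hx : ∀ x : Δ l, algebraMap K A a • x = algebraMap K A b • x := fun x =>
        congrArg (fun (u : Δ l →ₗ[A] Δ l) => u x) h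
      obtain ⟨x, hx0⟩ := exists_ne (0 : Δ l)
      apply hx0
      have hz : algebraMap K A (a - b) • x = 0 := by
        rw [map_sub, sub_smul, hx x, sub_self]
      have : x = algebraMap K A (a - b)⁻¹ • (algebraMap K A (a - b) • x) := by
        rw [← mul_smul, ← map_mul, inv_mul_cancel₀ (sub_ne_zero.2 hne), map_one, one_smul]
      rw [this, hz, smul_zero]
    calc T l l = finrank K (P l →ₗ[A] Δ l) := rfl
      _ = finrank K (Δ l →ₗ[A] Δ l) :=
          ((LinearEquiv.ofBijective Φ ⟨hΦinj, hΦsurj⟩).finrank_eq).symm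
      _ = finrank K K := ((LinearEquiv.ofBijective Ψ ⟨hΨinj, hΨsurj⟩).finrank_eq).symm
      _ = 1 := finrank_self K
  -- Step D: the dimension of `Hom(P l, N)` through a Δ-filtration
  have key : ∀ (N : Type) (iN1 : AddCommGroup N) (iN2 : Module A N), Module.Finite A N →
      ∀ (n : ℕ) (cc : Fin (n+1) → Submodule A N), Monotone cc → cc 0 = ⊥ →
      cc (Fin.last n) = ⊤ →
      ∀ (mm : Fin n → Λ),
        (∀ k : Fin n, Nonempty (Subquot (cc k.castSucc) (cc k.succ) ≃ₗ[A] Δ (mm k))) →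
      ∀ l, hdim K A (P l) N = ∑ k : Fin n, T l (mm k) := by
    intro N iN1 iN2 iN3 n cc hmono h0 hl mm hmms l
    haveI := hproj l
    have hstep : ∀ k : Fin n, hdim K A (P l) ↥(cc k.succ)
        = hdim K A (P l) ↥(cc k.castSucc) + T l (mm k) := by
      intro k
      haveI := hwSubFin K A N (cc k.succ)
      have hadd := hdim_add K A (P l) ↥(cc k.succ)
        ((cc k.castSucc).comap (cc k.succ).subtype)
      have hc1 : hdim K A (P l) ↥((cc k.castSucc).comap (cc k.succ).subtype)
          = hdim K A (P l) ↥(cc k.castSucc) :=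
        hdim_congr K A _ _ _ (Submodule.comapSubtypeEquivOfLe (hmono (Fin.castSucc_le_succ k)))
      have hc2 : hdim K A (P l) (↥(cc k.succ) ⧸ (cc k.castSucc).comap (cc k.succ).subtype)
          = T l (mm k) := hdim_congr K A _ _ _ (hmms k).some
      rw [hadd, hc1, hc2]
    have h0' : hdim K A (P l) ↥(cc 0) = 0 := by
      refine hdim_zero K A _ _ ?_
      refine ⟨fun a b => Subtype.ext ?_⟩
      have ha : (a : N) ∈ (⊥ : Submodule A N) := by rw [← h0]; exact a.2
      have hb : (b : N) ∈ (⊥ : Submodule A N) := by rw [← h0]; exact b.2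
      rw [Submodule.mem_bot] at ha hb
      rw [ha, hb]
    have htel : ∀ j : ℕ, ∀ hj : j ≤ n, hdim K A (P l) ↥(cc ⟨j, Nat.lt_succ_of_le hj⟩)
        = ∑ k : Fin n, if k.val < j then T l (mm k) else 0 := by
      intro j
      induction j with
      | zero =>
        intro hj
        have he : (⟨0, Nat.lt_succ_of_le hj⟩ : Fin (n+1)) = 0 := rfl
        rw [he, h0']
        exact (Finset.sum_eq_zero fun k _ => by simp).symm
      | succ j ih =>
        intro hj
        have hjn : j < n := hj
        have hsucc : (⟨j+1, Nat.lt_succ_of_le hj⟩ : Fin (n+1)) = (⟨j, hjn⟩ : Fin n).succ := rfl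
        rw [hsucc, hstep ⟨j, hjn⟩]
        have hcast : (⟨j, hjn⟩ : Fin n).castSucc
            = (⟨j, Nat.lt_succ_of_le (le_of_lt hjn)⟩ : Fin (n+1)) := rfl
        rw [hcast, ih (le_of_lt hjn)]
        have hsplit : ∀ k : Fin n, (if k.val < j+1 then T l (mm k) else 0)
            = (if k.val < j then T l (mm k) else 0)
              + (if k = ⟨j, hjn⟩ then T l (mm k) else 0) := by
          intro k
          rcases lt_trichotomy k.val j with h | h | h
          · rw [if_pos (by omega), if_pos h,
              if_neg (fun he => by rw [he] at h; exact absurd h (lt_irrefl j)), Nat.add_zero]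
          · rw [if_pos (by omega), if_neg (by omega),
              if_pos (Fin.ext h), Nat.zero_add]
          · rw [if_neg (by omega), if_neg (by omega),
              if_neg (fun he => by rw [he] at h; exact absurd h (lt_irrefl j)), Nat.add_zero]
        rw [Finset.sum_congr rfl (fun k _ => hsplit k), Finset.sum_add_distrib,
          Finset.sum_ite_eq' Finset.univ (⟨j, hjn⟩ : Fin n) (fun k => T l (mm k)),
          if_pos (Finset.mem_univ _)]
    have hfinal := htel n le_rfl
    have hlast : (⟨n, Nat.lt_succ_of_le le_rfl⟩ : Fin (n+1)) = Fin.last n := rfl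
    rw [hlast, hl] at hfinal
    have htop : hdim K A (P l) ↥(⊤ : Submodule A N) = hdim K A (P l) N :=
      hdim_congr K A _ _ _ Submodule.topEquiv
    rw [htop] at hfinal
    rw [hfinal]
    exact Finset.sum_congr rfl fun k _ => if_pos k.isLt
  -- Step E: index the factors
  set mm : Fin r → Λ := fun k => (hcq k).choose with hmm
  have hmmspec : ∀ k, Nonempty (Subquot (c k.castSucc) (c k.succ) ≃ₗ[A] Δ (mm k)) :=
    fun k => (hcq k).choose_spec
  set mm' : Fin s → Λ := fun k => (hc'q k).choose with hmm'
  have hmm'spec : ∀ k, Nonempty (Subquot (c' k.castSucc) (c' k.succ) ≃ₗ[A] Δ (mm' k)) :=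
    fun k => (hc'q k).choose_spec
  have huniq : ∀ a b : Λ, Nonempty (Δ a ≃ₗ[A] Δ b) → a = b := by
    intro a b ⟨e⟩
    haveI := hΔnontriv a
    have hea : (e : Δ a →ₗ[A] Δ b) ≠ 0 := by
      intro h0
      obtain ⟨x, hx⟩ := exists_ne (0 : Δ a)
      apply hx
      apply e.injective
      have : e x = 0 := by rw [show (e : Δ a → Δ b) x = (e : Δ a →ₗ[A] Δ b) x from rfl, h0]; rfl
      simp [this]
    have heb : (e.symm : Δ b →ₗ[A] Δ a) ≠ 0 := by
      intro h0
      apply hea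
      ext x
      have : e.symm (e x) = 0 := by
        rw [show (e.symm : Δ b → Δ a) (e x) = (e.symm : Δ b →ₗ[A] Δ a) (e x) from rfl, h0]; rfl
      simp only [LinearEquiv.symm_apply_apply] at this
      simp [this]
    refine le_antisymm ?_ ?_
    · by_contra hle; exact hea (hhom a b hle _)
    · by_contra hle; exact heb (hhom b a hle _)
  -- the multiplicity counts
  set v : Λ → ℕ := fun μ => (Finset.univ.filter (fun k => mm k = μ)).card with hv
  set v' : Λ → ℕ := fun μ => (Finset.univ.filter (fun k => mm' k = μ)).card with hv'
  have hcount : ∀ μ,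
      Nat.card {k : Fin r // Nonempty (Subquot (c k.castSucc) (c k.succ) ≃ₗ[A] Δ μ)} = v μ := by
    intro μ
    have hiff : ∀ k : Fin r,
        Nonempty (Subquot (c k.castSucc) (c k.succ) ≃ₗ[A] Δ μ) ↔ mm k = μ := by
      intro k
      constructor
      · rintro ⟨e⟩
        exact huniq _ _ ⟨((hmmspec k).some.symm.trans e)⟩
      · rintro rfl
        exact hmmspec k
    rw [Nat.card_congr (Equiv.subtypeEquivRight hiff), Nat.card_eq_fintype_card,
      Fintype.card_subtype]
  have hcount' : ∀ μ,
      Nat.card {k : Fin s // Nonempty (Subquot (c' k.castSucc) (c' k.succ) ≃ₗ[A] Δ μ)} = v' μ := by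
    intro μ
    have hiff : ∀ k : Fin s,
        Nonempty (Subquot (c' k.castSucc) (c' k.succ) ≃ₗ[A] Δ μ) ↔ mm' k = μ := by
      intro k
      constructor
      · rintro ⟨e⟩
        exact huniq _ _ ⟨((hmm'spec k).some.symm.trans e)⟩
      · rintro rfl
        exact hmm'spec k
    rw [Nat.card_congr (Equiv.subtypeEquivRight hiff), Nat.card_eq_fintype_card,
      Fintype.card_subtype]
  -- the two linear systems agree
  have hsys : ∀ l, ∑ μ : Λ, v μ * T l μ = ∑ μ : Λ, v' μ * T l μ := by
    intro l
    have h1 := key M inferInstance inferInstance inferInstance r c hc hc0 hcl mm hmmspec l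
    have h2 := key M inferInstance inferInstance inferInstance s c' hc' hc'0 hc'l mm' hmm'spec l
    have e1 : ∑ μ : Λ, v μ * T l μ = ∑ k : Fin r, T l (mm k) := by
      rw [← Finset.sum_fiberwise' Finset.univ mm (fun μ => T l μ)]
      refine Finset.sum_congr rfl fun μ _ => ?_
      rw [Finset.sum_const, smul_eq_mul, hv]
    have e2 : ∑ μ : Λ, v' μ * T l μ = ∑ k : Fin s, T l (mm' k) := by
      rw [← Finset.sum_fiberwise' Finset.univ mm' (fun μ => T l μ)]
      refine Finset.sum_congr rfl fun μ _ => ?_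
      rw [Finset.sum_const, smul_eq_mul, hv']
    rw [e1, e2, ← h1, ← h2]
  -- triangularity: conclude `v = v'`
  have hveq : ∀ μ, v μ = v' μ := by
    by_contra hcon
    push_neg at hcon
    set D : Finset Λ := Finset.univ.filter (fun μ => v μ ≠ v' μ) with hD
    have hDne : D.Nonempty := by
      obtain ⟨μ, hμ⟩ := hcon
      exact ⟨μ, by simp [hD, hμ]⟩
    obtain ⟨l0, hl0D, hl0max⟩ := D.exists_maximal hDne
    have hl0 : v l0 ≠ v' l0 := by simpa [hD] using hl0D
    have htail : ∀ μ ∈ Finset.univ.erase l0, v μ * T l0 μ = v' μ * T l0 μ := by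
      intro μ hμ
      have hne : μ ≠ l0 := (Finset.mem_erase.1 hμ).1
      by_cases hTμ : T l0 μ = 0
      · rw [hTμ, Nat.mul_zero, Nat.mul_zero]
      · have hle : l0 ≤ μ := by
          by_contra hl
          exact hTμ (hT0 l0 μ hl)
        have hlt : l0 < μ := lt_of_le_of_ne hle (Ne.symm hne)
        have : μ ∉ D := fun hmem => absurd hlt (not_lt_of_ge (hl0max hmem (le_of_lt hlt)))
        have : v μ = v' μ := by
          by_contra hvne
          exact this (by simp [hD, hvne])
        rw [this]
    have hs := hsys l0
    rw [← Finset.add_sum_erase _ _ (Finset.mem_univ l0),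
      ← Finset.add_sum_erase _ _ (Finset.mem_univ l0),
      Finset.sum_congr rfl htail, hT1 l0, Nat.mul_one, Nat.mul_one,
      Nat.add_right_cancel_iff] at hs
    exact hl0 hs
  -- conclude
  constructor
  · have hr : r = ∑ μ : Λ, v μ := by
      have := Finset.card_eq_sum_card_fiberwise
        (f := mm) (s := Finset.univ) (t := Finset.univ) (fun k _ => Finset.mem_univ (mm k))
      simpa [hv] using this
    have hs' : s = ∑ μ : Λ, v' μ := by
      have := Finset.card_eq_sum_card_fiberwise
        (f := mm') (s := Finset.univ) (t := Finset.univ) (fun k _ => Finset.mem_univ (mm' k))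
      simpa [hv'] using this
    rw [hr, hs']
    exact Finset.sum_congr rfl fun μ _ => hveq μ
  · intro l
    rw [hcount l, hcount' l, hveq l]
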